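/- Intra-option policy gradient theorem for the soft robust loss (Theorem 2): In the finite rectangular option MDP, let the intra-option policies be a parameterized family πo : ℝ → O → S → A → ℝ (for each θ ∈ ℝ, πo θ ω s a ≥ 0 and ∑_a πo θ ω s a = 1), while πΩ, β, K, c, w do not depend on θ, and for each θ let (QΩ θ, Qo θ, Qβ θ, VΩ θ) satisfy the rectangular Bellman system with intra-option policies πo θ; let Pγ θ, Pγ^k θ and the averaged value functions Q̄o θ be defined accordingly. Define the discounted state–option weighting d̄ θ ((s₀,ω₀),(s,ω)) := ∑_{k=0}^∞ Pγ^k θ ((s₀,ω₀),(s,ω)) (this series converges since ∑_{(s,ω)} Pγ^k θ ((s₀,ω₀),(s,ω)) = γ^k and 0 ≤ γ < 1). Fix θ₀ ∈ ℝ and assume that for every ω, s, a the map θ ↦ πo θ ω s a is differentiable at θ₀ and for every s, ω, p the map θ ↦ QΩ θ s ω p is differentiable at θ₀. Then for every initial state–option pair (s₀, ω₀): ∑_p w p * deriv (θ ↦ QΩ θ s₀ ω₀ p) θ₀ = ∑_{(s,ω)} d̄ θ₀ ((s₀,ω₀),(s,ω)) * ∑_a (deriv (θ ↦ πo θ ω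 s a) θ₀) * Q̄o θ₀ s ω a. -/

import Mathlib

open scoped Classical

open Finset

variable {S O A P : Type*} [Fintype S] [Fintype O] [Fintype A] [Fintype P]

/-- The average transition kernel `K̄ s a s' = ∑ p, w p * K p s a s'`. -/
noncomputable def Kbar (w : P → ℝ) (K : P → S → A → S → ℝ) (s : S) (a : A) (s' : S) : ℝ :=
  ∑ p, w p * K p s a s'

/-- One-step discounted state–option kernel `Pγ`. -/
noncomputable def Pgam (w : P → ℝ) (K : P → S → A → S → ℝ) (γ : ℝ)
    (πo : O → S → A → ℝ) (β : O → S → ℝ) (πΩ : S → O → ℝ)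
    (x y : S × O) : ℝ :=
  ∑ a, πo x.2 x.1 a * γ * Kbar w K x.1 a y.1 *
    ((1 - β x.2 y.1) * (if y.2 = x.2 then 1 else 0) + β x.2 y.1 * πΩ y.1 y.2)

/-- k-step iterates `Pγ^k` of the one-step discounted state–option kernel. -/
noncomputable def PgamIter (w : P → ℝ) (K : P → S → A → S → ℝ) (γ : ℝ)
    (πo : O → S → A → ℝ) (β : O → S → ℝ) (πΩ : S → O → ℝ) :
    ℕ → S × O → S × O → ℝ
  | 0, x, y => if y = x then 1 else 0
  | (k + 1), x, y => ∑ z, Pgam w K γ πo β πΩ x z * PgamIter w K γ πo β πΩ k z y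

set_option linter.unusedSectionVars false

section Aux

variable (w : P → ℝ) (K : P → S → A → S → ℝ) (γ : ℝ) (πo : O → S → A → ℝ)
  (β : O → S → ℝ) (πΩ : S → O → ℝ)

lemma Kbar_nonneg (hw0 : ∀ p, 0 ≤ w p) (hK0 : ∀ p s a s', 0 ≤ K p s a s')
    (s : S) (a : A) (s' : S) : 0 ≤ Kbar w K s a s' :=
  Finset.sum_nonneg fun p _ => mul_nonneg (hw0 p) (hK0 p s a s')

lemma Kbar_row (hw1 : ∑ p, w p = 1) (hK1 : ∀ p s a, ∑ s', K p s a s' = 1)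
    (s : S) (a : A) : ∑ s', Kbar w K s a s' = 1 := by
  unfold Kbar
  rw [Finset.sum_comm]
  simp_rw [← Finset.mul_sum, hK1, mul_one]
  exact hw1

lemma Pgam_nonneg (hγ0 : 0 ≤ γ) (hw0 : ∀ p, 0 ≤ w p) (hK0 : ∀ p s a s', 0 ≤ K p s a s')
    (hπo0 : ∀ ω s a, 0 ≤ πo ω s a) (hπΩ0 : ∀ s ω, 0 ≤ πΩ s ω)
    (hβ0 : ∀ ω s, 0 ≤ β ω s) (hβ1 : ∀ ω s, β ω s ≤ 1) (x y : S × O) :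
    0 ≤ Pgam w K γ πo β πΩ x y := by
  refine Finset.sum_nonneg fun a _ => ?_
  have h1 : 0 ≤ Kbar w K x.1 a y.1 := Kbar_nonneg w K hw0 hK0 _ _ _
  have h2 : (0:ℝ) ≤ (1 - β x.2 y.1) * (if y.2 = x.2 then 1 else 0) + β x.2 y.1 * πΩ y.1 y.2 := by
    have : (0:ℝ) ≤ (if y.2 = x.2 then (1:ℝ) else 0) := by positivity
    have := mul_nonneg (by linarith [hβ1 x.2 y.1] : (0:ℝ) ≤ 1 - β x.2 y.1) this
    have := mul_nonneg (hβ0 x.2 y.1) (hπΩ0 y.1 y.2)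
    linarith
  exact mul_nonneg (mul_nonneg (mul_nonneg (hπo0 _ _ _) hγ0) h1) h2

lemma Pgam_row (hw1 : ∑ p, w p = 1) (hK1 : ∀ p s a, ∑ s', K p s a s' = 1)
    (hπΩ1 : ∀ s, ∑ ω, πΩ s ω = 1) (hπo1 : ∀ ω s, ∑ a, πo ω s a = 1) (x : S × O) :
    ∑ y, Pgam w K γ πo β πΩ x y = γ := by
  unfold Pgam
  rw [Fintype.sum_prod_type]
  have hin : ∀ s', ∑ ω' : O,
      ((1 - β x.2 s') * (if ω' = x.2 then 1 else 0) + β x.2 s' * πΩ s' ω') = 1 := by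
    intro s'
    rw [Finset.sum_add_distrib, ← Finset.mul_sum, ← Finset.mul_sum]
    simp [hπΩ1 s']
  have : ∀ s', ∑ ω' : O, ∑ a, πo x.2 x.1 a * γ * Kbar w K x.1 a s' *
      ((1 - β x.2 s') * (if ω' = x.2 then 1 else 0) + β x.2 s' * πΩ s' ω')
      = ∑ a, πo x.2 x.1 a * γ * Kbar w K x.1 a s' := by
    intro s'
    rw [Finset.sum_comm]
    refine Finset.sum_congr rfl fun a _ => ?_
    rw [← Finset.mul_sum, hin s', mul_one]
  simp_rw [this]
  rw [Finset.sum_comm]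
  simp_rw [← Finset.mul_sum, Kbar_row w K hw1 hK1, mul_one, ← Finset.sum_mul, hπo1, one_mul]

lemma PgamIter_nonneg (hγ0 : 0 ≤ γ) (hw0 : ∀ p, 0 ≤ w p) (hK0 : ∀ p s a s', 0 ≤ K p s a s')
    (hπo0 : ∀ ω s a, 0 ≤ πo ω s a) (hπΩ0 : ∀ s ω, 0 ≤ πΩ s ω)
    (hβ0 : ∀ ω s, 0 ≤ β ω s) (hβ1 : ∀ ω s, β ω s ≤ 1) :
    ∀ (k : ℕ) (x y : S × O), 0 ≤ PgamIter w K γ πo β πΩ k x y := by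
  intro k
  induction k with
  | zero => intro x y; simp only [PgamIter]; positivity
  | succ k ih =>
    intro x y
    simp only [PgamIter]
    exact Finset.sum_nonneg fun z _ =>
      mul_nonneg (Pgam_nonneg w K γ πo β πΩ hγ0 hw0 hK0 hπo0 hπΩ0 hβ0 hβ1 x z) (ih z y)

lemma PgamIter_row (hw1 : ∑ p, w p = 1) (hK1 : ∀ p s a, ∑ s', K p s a s' = 1)
    (hπΩ1 : ∀ s, ∑ ω, πΩ s ω = 1) (hπo1 : ∀ ω s, ∑ a, πo ω s a = 1) :
    ∀ (k : ℕ) (x : S × O), ∑ y, PgamIter w K γ πo β πΩ k x y = γ ^ k := by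
  intro k
  induction k with
  | zero => intro x; simp [PgamIter]
  | succ k ih =>
    intro x
    simp only [PgamIter]
    rw [Finset.sum_comm]
    simp_rw [← Finset.mul_sum, ih, ← Finset.sum_mul,
      Pgam_row w K γ πo β πΩ hw1 hK1 hπΩ1 hπo1, pow_succ]
    ring

lemma fixed_point_tsum
    (hγ0 : 0 ≤ γ) (hγ1 : γ < 1)
    (hw0 : ∀ p, 0 ≤ w p) (hw1 : ∑ p, w p = 1)
    (hK0 : ∀ p s a s', 0 ≤ K p s a s') (hK1 : ∀ p s a, ∑ s', K p s a s' = 1)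
    (hπo0 : ∀ ω s a, 0 ≤ πo ω s a) (hπo1 : ∀ ω s, ∑ a, πo ω s a = 1)
    (hπΩ0 : ∀ s ω, 0 ≤ πΩ s ω) (hπΩ1 : ∀ s, ∑ ω, πΩ s ω = 1)
    (hβ0 : ∀ ω s, 0 ≤ β ω s) (hβ1 : ∀ ω s, β ω s ≤ 1)
    (f u : S × O → ℝ)
    (hfix : ∀ x, f x = u x + ∑ y, Pgam w K γ πo β πΩ x y * f y)
    (x₀ : S × O) :
    f x₀ = ∑ q, (∑' k : ℕ, PgamIter w K γ πo β πΩ k x₀ q) * u q := by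
  have hI0 := PgamIter_nonneg w K γ πo β πΩ hγ0 hw0 hK0 hπo0 hπΩ0 hβ0 hβ1
  have hIrow := PgamIter_row w K γ πo β πΩ hw1 hK1 hπΩ1 hπo1
  have hIle : ∀ k (x y : S × O), PgamIter w K γ πo β πΩ k x y ≤ γ ^ k := by
    intro k x y
    calc PgamIter w K γ πo β πΩ k x y
        ≤ ∑ z, PgamIter w K γ πo β πΩ k x z :=
          Finset.single_le_sum (fun z _ => hI0 k x z) (Finset.mem_univ y)
      _ = γ ^ k := hIrow k x
  have hstep : ∀ (g : S × O → ℝ) (k : ℕ) (x : S × O),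
      ∑ y, Pgam w K γ πo β πΩ x y * ∑ z, PgamIter w K γ πo β πΩ k y z * g z
        = ∑ z, PgamIter w K γ πo β πΩ (k + 1) x z * g z := by
    intro g k x
    simp_rw [Finset.mul_sum]
    rw [Finset.sum_comm]
    refine Finset.sum_congr rfl fun z _ => ?_
    show _ = PgamIter w K γ πo β πΩ (k + 1) x z * g z
    simp only [PgamIter]
    rw [Finset.sum_mul]
    exact Finset.sum_congr rfl fun y _ => (mul_assoc _ _ _).symm
  have hiter : ∀ (n : ℕ) (x : S × O), f x
      = (∑ k ∈ Finset.range n, ∑ y, PgamIter w K γ πo β πΩ k x y * u y)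
        + ∑ y, PgamIter w K γ πo β πΩ n x y * f y := by
    intro n
    induction n with
    | zero =>
      intro x
      simp [PgamIter, ite_mul]
    | succ n ih =>
      intro x
      rw [hfix x]
      have h2 : ∑ y, Pgam w K γ πo β πΩ x y * f y
          = (∑ k ∈ Finset.range n, ∑ z, PgamIter w K γ πo β πΩ (k + 1) x z * u z)
            + ∑ z, PgamIter w K γ πo β πΩ (n + 1) x z * f z := by
        calc ∑ y, Pgam w K γ πo β πΩ x y * f y
            = ∑ y, Pgam w K γ πo β πΩ x y *
                ((∑ k ∈ Finset.range n, ∑ z, PgamIter w K γ πo β πΩ k y z * u z)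
                  + ∑ z, PgamIter w K γ πo β πΩ n y z * f z) := by
              exact Finset.sum_congr rfl fun y _ => by rw [← ih y]
          _ = (∑ y, Pgam w K γ πo β πΩ x y *
                ∑ k ∈ Finset.range n, ∑ z, PgamIter w K γ πo β πΩ k y z * u z)
              + ∑ y, Pgam w K γ πo β πΩ x y * ∑ z, PgamIter w K γ πo β πΩ n y z * f z := by
              simp_rw [mul_add, Finset.sum_add_distrib]
          _ = (∑ k ∈ Finset.range n, ∑ y, Pgam w K γ πo β πΩ x y *
                ∑ z, PgamIter w K γ πo β πΩ k y z * u z)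
              + ∑ z, PgamIter w K γ πo β πΩ (n + 1) x z * f z := by
              rw [hstep f n x]
              congr 1
              simp_rw [Finset.mul_sum]
              rw [Finset.sum_comm]
          _ = (∑ k ∈ Finset.range n, ∑ z, PgamIter w K γ πo β πΩ (k + 1) x z * u z)
              + ∑ z, PgamIter w K γ πo β πΩ (n + 1) x z * f z := by
              congr 1
              exact Finset.sum_congr rfl fun k _ => hstep u k x
      rw [h2, Finset.sum_range_succ']
      have h0 : ∑ y, PgamIter w K γ πo β πΩ 0 x y * u y = u x := by
        simp [PgamIter, ite_mul]
      rw [h0]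
      ring
  -- tail bound
  set Cf := ∑ y, |f y| with hCf
  have hfb : ∀ y, |f y| ≤ Cf := by
    intro y
    rw [hCf]
    exact Finset.single_le_sum (f := fun z => |f z|) (fun z _ => abs_nonneg _) (Finset.mem_univ y)
  have hCf0 : 0 ≤ Cf := by rw [hCf]; exact Finset.sum_nonneg fun y _ => abs_nonneg _
  have htailb : ∀ n, |∑ y, PgamIter w K γ πo β πΩ n x₀ y * f y| ≤ γ ^ n * Cf := by
    intro n
    calc |∑ y, PgamIter w K γ πo β πΩ n x₀ y * f y|
        ≤ ∑ y, |PgamIter w K γ πo β πΩ n x₀ y * f y| := Finset.abs_sum_le_sum_abs _ _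
      _ = ∑ y, PgamIter w K γ πo β πΩ n x₀ y * |f y| := by
          exact Finset.sum_congr rfl fun y _ => by
            rw [abs_mul, abs_of_nonneg (hI0 n x₀ y)]
      _ ≤ ∑ y, PgamIter w K γ πo β πΩ n x₀ y * Cf :=
          Finset.sum_le_sum fun y _ => mul_le_mul_of_nonneg_left (hfb y) (hI0 n x₀ y)
      _ = γ ^ n * Cf := by rw [← Finset.sum_mul, hIrow n x₀]
  have hR : Filter.Tendsto (fun n => ∑ y, PgamIter w K γ πo β πΩ n x₀ y * f y)
      Filter.atTop (nhds 0) := by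
    have hnorm : ∀ n, ‖∑ y, PgamIter w K γ πo β πΩ n x₀ y * f y‖ ≤ γ ^ n * Cf := by
      intro n; simpa [Real.norm_eq_abs] using htailb n
    exact squeeze_zero_norm hnorm
      (by simpa using (tendsto_pow_atTop_nhds_zero_of_lt_one hγ0 hγ1).mul_const Cf)
  set t : ℕ → ℝ := fun k => ∑ y, PgamIter w K γ πo β πΩ k x₀ y * u y with htdef
  set Cu := ∑ y, |u y| with hCu
  have hub : ∀ y, |u y| ≤ Cu := by
    intro y
    rw [hCu]
    exact Finset.single_le_sum (f := fun z => |u z|) (fun z _ => abs_nonneg _) (Finset.mem_univ y)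
  have htb : ∀ k, |t k| ≤ γ ^ k * Cu := by
    intro k
    calc |t k| ≤ ∑ y, |PgamIter w K γ πo β πΩ k x₀ y * u y| := Finset.abs_sum_le_sum_abs _ _
      _ = ∑ y, PgamIter w K γ πo β πΩ k x₀ y * |u y| := by
          exact Finset.sum_congr rfl fun y _ => by
            rw [abs_mul, abs_of_nonneg (hI0 k x₀ y)]
      _ ≤ ∑ y, PgamIter w K γ πo β πΩ k x₀ y * Cu :=
          Finset.sum_le_sum fun y _ => mul_le_mul_of_nonneg_left (hub y) (hI0 k x₀ y)
      _ = γ ^ k * Cu := by rw [← Finset.sum_mul, hIrow k x₀]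
  have hgeo : Summable fun k : ℕ => γ ^ k * Cu :=
    (summable_geometric_of_lt_one hγ0 hγ1).mul_right Cu
  have hts : Summable t :=
    Summable.of_abs (Summable.of_nonneg_of_le (fun k => abs_nonneg _) htb hgeo)
  have tend1 : Filter.Tendsto (fun n => ∑ k ∈ Finset.range n, t k)
      Filter.atTop (nhds (∑' k, t k)) := hts.hasSum.tendsto_sum_nat
  have tend2 : Filter.Tendsto (fun n => ∑ k ∈ Finset.range n, t k)
      Filter.atTop (nhds (f x₀)) := by
    have heq : (fun n => ∑ k ∈ Finset.range n, t k)
        = fun n => f x₀ - ∑ y, PgamIter w K γ πo β πΩ n x₀ y * f y := by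
      funext n
      have := hiter n x₀
      simp only [htdef]
      linarith
    rw [heq]
    simpa using Filter.Tendsto.sub (tendsto_const_nhds (x := f x₀)) hR
  have hkey : ∑' k, t k = f x₀ := tendsto_nhds_unique tend1 tend2
  have hsummy : ∀ y : S × O, Summable fun k : ℕ => PgamIter w K γ πo β πΩ k x₀ y * u y := by
    intro y
    refine Summable.of_abs (Summable.of_nonneg_of_le (fun k => abs_nonneg _)
      (fun k => ?_) ((summable_geometric_of_lt_one hγ0 hγ1).mul_right |u y|))
    rw [abs_mul, abs_of_nonneg (hI0 k x₀ y)]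
    exact mul_le_mul_of_nonneg_right (hIle k x₀ y) (abs_nonneg _)
  calc f x₀ = ∑' k, t k := hkey.symm
    _ = ∑ y, ∑' k, PgamIter w K γ πo β πΩ k x₀ y * u y := by
        rw [htdef]
        exact Summable.tsum_finsetSum fun y _ => hsummy y
    _ = ∑ q, (∑' k : ℕ, PgamIter w K γ πo β πΩ k x₀ q) * u q :=
        Finset.sum_congr rfl fun y _ => tsum_mul_right

end Aux

/-- Intra-option policy gradient theorem for the soft robust loss (Theorem 2). -/
theorem intra_option_policy_gradient_soft_robust
    [Nonempty S] [Nonempty O] [Nonempty A] [Nonempty P]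
    (γ : ℝ) (hγ0 : 0 ≤ γ) (hγ1 : γ < 1)
    (c : S → A → ℝ)
    (K : P → S → A → S → ℝ)
    (hK0 : ∀ p s a s', 0 ≤ K p s a s') (hK1 : ∀ p s a, ∑ s', K p s a s' = 1)
    (w : P → ℝ) (hw0 : ∀ p, 0 ≤ w p) (hw1 : ∑ p, w p = 1)
    (πΩ : S → O → ℝ)
    (hπΩ0 : ∀ s ω, 0 ≤ πΩ s ω) (hπΩ1 : ∀ s, ∑ ω, πΩ s ω = 1)
    (πo : ℝ → O → S → A → ℝ)
    (hπo0 : ∀ θ ω s a, 0 ≤ πo θ ω s a) (hπo1 : ∀ θ ω s, ∑ a, πo θ ω s a = 1)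
    (β : O → S → ℝ) (hβ0 : ∀ ω s, 0 ≤ β ω s) (hβ1 : ∀ ω s, β ω s ≤ 1)
    (QΩ : ℝ → S → O → P → ℝ) (Qo : ℝ → S → O → A → P → ℝ)
    (Qβ : ℝ → S → O → P → ℝ) (VΩ : ℝ → S → P → ℝ)
    (hQΩ : ∀ θ s ω p, QΩ θ s ω p = ∑ a, πo θ ω s a * Qo θ s ω a p)
    (hQo : ∀ θ s ω a p,
      Qo θ s ω a p = c s a + γ * ∑ s', K p s a s' * (∑ p', w p' * Qβ θ s' ω p'))
    (hQβ : ∀ θ s ω p, Qβ θ s ω p = (1 - β ω s) * QΩ θ s ω p + β ω s * VΩ θ s p)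
    (hVΩ : ∀ θ s p, VΩ θ s p = ∑ ω, πΩ s ω * QΩ θ s ω p)
    (θ₀ : ℝ)
    (hdπ : ∀ ω s a, DifferentiableAt ℝ (fun θ => πo θ ω s a) θ₀)
    (hdQ : ∀ s ω p, DifferentiableAt ℝ (fun θ => QΩ θ s ω p) θ₀)
    (s₀ : S) (ω₀ : O) :
    ∑ p, w p * deriv (fun θ => QΩ θ s₀ ω₀ p) θ₀ =
      ∑ q : S × O, (∑' k : ℕ, PgamIter w K γ (πo θ₀) β πΩ k (s₀, ω₀) q) *
        (∑ a, deriv (fun θ => πo θ q.2 q.1 a) θ₀ * (∑ p, w p * Qo θ₀ q.1 q.2 a p)) := by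
  classical
  set f : S × O → ℝ := fun x => ∑ p, w p * deriv (fun θ => QΩ θ x.1 x.2 p) θ₀ with hf
  set u : S × O → ℝ := fun x => ∑ a, deriv (fun θ => πo θ x.2 x.1 a) θ₀ *
      (∑ p, w p * Qo θ₀ x.1 x.2 a p) with hu
  have hfx : ∀ s ω, f (s, ω) = ∑ p, w p * deriv (fun θ => QΩ θ s ω p) θ₀ := fun _ _ => rfl
  have hux : ∀ s ω, u (s, ω) = ∑ a, deriv (fun θ => πo θ ω s a) θ₀ *
      (∑ p, w p * Qo θ₀ s ω a p) := fun _ _ => rfl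
  set bf : S → O → ℝ :=
    fun s ω => (1 - β ω s) * f (s, ω) + β ω s * ∑ ω', πΩ s ω' * f (s, ω') with hbf
  have hbfx : ∀ s ω, bf s ω
      = (1 - β ω s) * f (s, ω) + β ω s * ∑ ω', πΩ s ω' * f (s, ω') := fun _ _ => rfl
  -- derivative of the averaged QΩ
  have hQb : ∀ s ω, HasDerivAt (fun θ => ∑ p, w p * QΩ θ s ω p) (f (s, ω)) θ₀ := by
    intro s ω
    rw [hfx]
    exact HasDerivAt.fun_sum fun p _ => HasDerivAt.const_mul (w p) (hdQ s ω p).hasDerivAt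
  -- the averaged Qβ as a function of the averaged QΩ
  have hBeq : ∀ s ω θ, ∑ p, w p * Qβ θ s ω p
      = (1 - β ω s) * (∑ p, w p * QΩ θ s ω p)
        + β ω s * ∑ ω', πΩ s ω' * ∑ p, w p * QΩ θ s ω' p := by
    intro s ω θ
    have h1 : ∀ p, w p * Qβ θ s ω p
        = (1 - β ω s) * (w p * QΩ θ s ω p)
          + ∑ ω', β ω s * πΩ s ω' * (w p * QΩ θ s ω' p) := by
      intro p
      have h2 : ∑ ω', β ω s * πΩ s ω' * (w p * QΩ θ s ω' p)
          = w p * (β ω s * ∑ ω', πΩ s ω' * QΩ θ s ω' p) := by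
        rw [Finset.mul_sum, Finset.mul_sum]
        exact Finset.sum_congr rfl fun ω' _ => by ring
      rw [h2, hQβ, hVΩ]
      ring
    calc ∑ p, w p * Qβ θ s ω p
        = ∑ p, ((1 - β ω s) * (w p * QΩ θ s ω p)
            + ∑ ω', β ω s * πΩ s ω' * (w p * QΩ θ s ω' p)) :=
          Finset.sum_congr rfl fun p _ => h1 p
      _ = (∑ p, (1 - β ω s) * (w p * QΩ θ s ω p))
          + ∑ p, ∑ ω', β ω s * πΩ s ω' * (w p * QΩ θ s ω' p) := Finset.sum_add_distrib
      _ = (1 - β ω s) * (∑ p, w p * QΩ θ s ω p)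
          + β ω s * ∑ ω', πΩ s ω' * ∑ p, w p * QΩ θ s ω' p := by
          congr 1
          · rw [Finset.mul_sum]
          · rw [Finset.sum_comm, Finset.mul_sum]
            refine Finset.sum_congr rfl fun ω' _ => ?_
            rw [Finset.mul_sum, Finset.mul_sum]
            exact Finset.sum_congr rfl fun p _ => by ring
  -- derivative of the averaged Qβ
  have hB : ∀ s ω, HasDerivAt (fun θ => ∑ p, w p * Qβ θ s ω p) (bf s ω) θ₀ := by
    intro s ω
    have heq : (fun θ => ∑ p, w p * Qβ θ s ω p)
        = fun θ => (1 - β ω s) * (∑ p, w p * QΩ θ s ω p)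
            + β ω s * ∑ ω', πΩ s ω' * ∑ p, w p * QΩ θ s ω' p := funext fun θ => hBeq s ω θ
    rw [heq, hbfx]
    exact ((hQb s ω).const_mul _).add
      ((HasDerivAt.fun_sum fun ω' _ => (hQb s ω').const_mul (πΩ s ω')).const_mul (β ω s))
  -- derivative of QΩ itself
  have hQd : ∀ s ω p, HasDerivAt (fun θ => QΩ θ s ω p)
      (∑ a, (deriv (fun θ => πo θ ω s a) θ₀ *
          (c s a + γ * ∑ s', K p s a s' * (∑ p', w p' * Qβ θ₀ s' ω p'))
        + πo θ₀ ω s a * (γ * ∑ s', K p s a s' * bf s' ω))) θ₀ := by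
    intro s ω p
    have heq : (fun θ => QΩ θ s ω p)
        = fun θ => ∑ a, πo θ ω s a *
            (c s a + γ * ∑ s', K p s a s' * (∑ p', w p' * Qβ θ s' ω p')) := by
      funext θ
      rw [hQΩ]
      exact Finset.sum_congr rfl fun a _ => by rw [hQo]
    rw [heq]
    refine HasDerivAt.fun_sum fun a _ => ?_
    have hinner : HasDerivAt
        (fun θ => c s a + γ * ∑ s', K p s a s' * (∑ p', w p' * Qβ θ s' ω p'))
        (γ * ∑ s', K p s a s' * bf s' ω) θ₀ :=
      HasDerivAt.const_add (c s a)
        ((HasDerivAt.fun_sum fun s' _ => (hB s' ω).const_mul (K p s a s')).const_mul γ)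
    exact (hdπ ω s a).hasDerivAt.mul hinner
  -- value of f via the Bellman system
  have hfval : ∀ s ω, f (s, ω) = ∑ p, w p * ∑ a,
      (deriv (fun θ => πo θ ω s a) θ₀ * Qo θ₀ s ω a p
        + πo θ₀ ω s a * (γ * ∑ s', K p s a s' * bf s' ω)) := by
    intro s ω
    rw [hfx]
    refine Finset.sum_congr rfl fun p _ => ?_
    rw [(hQd s ω p).deriv]
    simp only [hQo]
  -- evaluation of ∑ y, Pgam x y * f y
  have hPsum : ∀ s ω, ∑ y, Pgam w K γ (πo θ₀) β πΩ (s, ω) y * f y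
      = ∑ a, πo θ₀ ω s a * (γ * ∑ s', Kbar w K s a s' * bf s' ω) := by
    intro s ω
    rw [Fintype.sum_prod_type]
    simp only [Pgam, Finset.sum_mul]
    have key : ∀ a s', ∑ ω' : O,
        πo θ₀ ω s a * γ * Kbar w K s a s' *
          ((1 - β ω s') * (if ω' = ω then 1 else 0) + β ω s' * πΩ s' ω') * f (s', ω')
        = πo θ₀ ω s a * γ * Kbar w K s a s' * bf s' ω := by
      intro a s'
      have e1 : ∀ ω' : O,
          πo θ₀ ω s a * γ * Kbar w K s a s' *
            ((1 - β ω s') * (if ω' = ω then 1 else 0) + β ω s' * πΩ s' ω') * f (s', ω')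
          = (if ω' = ω then
              πo θ₀ ω s a * γ * Kbar w K s a s' * ((1 - β ω s') * f (s', ω')) else 0)
            + πo θ₀ ω s a * γ * Kbar w K s a s' * (β ω s' * (πΩ s' ω' * f (s', ω'))) := by
        intro ω'
        by_cases h : ω' = ω <;> simp [h] <;> ring
      simp_rw [e1]
      rw [Finset.sum_add_distrib,
        Finset.sum_ite_eq' Finset.univ ω
          (fun ω' => πo θ₀ ω s a * γ * Kbar w K s a s' * ((1 - β ω s') * f (s', ω')))]
      simp only [Finset.mem_univ, if_true]
      rw [← Finset.mul_sum, ← Finset.mul_sum, ← mul_add, hbfx]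
    have hswap : (∑ s', ∑ ω' : O, ∑ a, πo θ₀ ω s a * γ * Kbar w K s a s' *
          ((1 - β ω s') * (if ω' = ω then 1 else 0) + β ω s' * πΩ s' ω') * f (s', ω'))
        = ∑ s', ∑ a, ∑ ω' : O, πo θ₀ ω s a * γ * Kbar w K s a s' *
          ((1 - β ω s') * (if ω' = ω then 1 else 0) + β ω s' * πΩ s' ω') * f (s', ω') :=
      Finset.sum_congr rfl fun s' _ => Finset.sum_comm
    rw [hswap]
    simp_rw [key]
    rw [Finset.sum_comm]
    refine Finset.sum_congr rfl fun a _ => ?_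
    rw [Finset.mul_sum, Finset.mul_sum]
    exact Finset.sum_congr rfl fun s' _ => by ring
  -- fixed point equation
  have hfix : ∀ x : S × O, f x = u x + ∑ y, Pgam w K γ (πo θ₀) β πΩ x y * f y := by
    rintro ⟨s, ω⟩
    rw [hPsum s ω, hfval s ω, hux s ω]
    have hsplit : ∀ p, w p * ∑ a,
        (deriv (fun θ => πo θ ω s a) θ₀ * Qo θ₀ s ω a p
          + πo θ₀ ω s a * (γ * ∑ s', K p s a s' * bf s' ω))
        = (∑ a, deriv (fun θ => πo θ ω s a) θ₀ * (w p * Qo θ₀ s ω a p))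
          + ∑ a, πo θ₀ ω s a * (γ * ∑ s', (w p * K p s a s') * bf s' ω) := by
      intro p
      rw [Finset.mul_sum, ← Finset.sum_add_distrib]
      refine Finset.sum_congr rfl fun a _ => ?_
      have e : ∑ s', (w p * K p s a s') * bf s' ω
          = w p * ∑ s', K p s a s' * bf s' ω := by
        rw [Finset.mul_sum]
        exact Finset.sum_congr rfl fun s' _ => by ring
      rw [e]; ring
    calc ∑ p, w p * ∑ a,
          (deriv (fun θ => πo θ ω s a) θ₀ * Qo θ₀ s ω a p
            + πo θ₀ ω s a * (γ * ∑ s', K p s a s' * bf s' ω))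
        = ∑ p, ((∑ a, deriv (fun θ => πo θ ω s a) θ₀ * (w p * Qo θ₀ s ω a p))
            + ∑ a, πo θ₀ ω s a * (γ * ∑ s', (w p * K p s a s') * bf s' ω)) :=
          Finset.sum_congr rfl fun p _ => hsplit p
      _ = (∑ p, ∑ a, deriv (fun θ => πo θ ω s a) θ₀ * (w p * Qo θ₀ s ω a p))
          + ∑ p, ∑ a, πo θ₀ ω s a * (γ * ∑ s', (w p * K p s a s') * bf s' ω) :=
          Finset.sum_add_distrib
      _ = (∑ a, deriv (fun θ => πo θ ω s a) θ₀ * ∑ p, w p * Qo θ₀ s ω a p)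
          + ∑ a, πo θ₀ ω s a * (γ * ∑ s', Kbar w K s a s' * bf s' ω) := by
          congr 1
          · rw [Finset.sum_comm]
            refine Finset.sum_congr rfl fun a _ => ?_
            rw [← Finset.mul_sum]
          · rw [Finset.sum_comm]
            refine Finset.sum_congr rfl fun a _ => ?_
            rw [← Finset.mul_sum]
            congr 1
            rw [← Finset.mul_sum]
            congr 1
            rw [Finset.sum_comm]
            refine Finset.sum_congr rfl fun s' _ => ?_
            simp only [Kbar]
            rw [Finset.sum_mul]
  -- conclude via the geometric series lemma
  have hmain := fixed_point_tsum w K γ (πo θ₀) β πΩ hγ0 hγ1 hw0 hw1 hK0 hK1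
    (hπo0 θ₀) (hπo1 θ₀) hπΩ0 hπΩ1 hβ0 hβ1 f u hfix (s₀, ω₀)
  calc ∑ p, w p * deriv (fun θ => QΩ θ s₀ ω₀ p) θ₀
      = f (s₀, ω₀) := (hfx s₀ ω₀).symm
    _ = ∑ q, (∑' k : ℕ, PgamIter w K γ (πo θ₀) β πΩ k (s₀, ω₀) q) * u q := hmain
    _ = ∑ q : S × O, (∑' k : ℕ, PgamIter w K γ (πo θ₀) β πΩ k (s₀, ω₀) q) *
          (∑ a, deriv (fun θ => πo θ q.2 q.1 a) θ₀ * (∑ p, w p * Qo θ₀ q.1 q.2 a p)) :=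
        Finset.sum_congr rfl fun q _ => by rw [hu]
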